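/- Let a, b, c be nonzero integers with gcd(a, b, c) = 1 and let m, n be positive integers. If X, Y ∈ M₂(ℤ) satisfy aX^m + bY^n = cI, then there exist complex numbers x₁, x₂ which are the eigenvalues of X (with multiplicity) and complex numbers y₁, y₂ which are the eigenvalues of Y (with multiplicity) such that a·x₁^m + b·y₁^n = c and a·x₂^m + b·y₂^n = c. -/

import Mathlib

section Aux
open Polynomial Matrix

lemma my_charpoly_fin_two (M : Matrix (Fin 2) (Fin 2) ℂ) :
    M.charpoly = X ^ 2 - C M.trace * X + C M.det := by
  rw [Matrix.charpoly, Matrix.det_fin_two, Matrix.trace_fin_two, Matrix.det_fin_two,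
    charmatrix_apply_eq, charmatrix_apply_eq,
    charmatrix_apply_ne _ _ _ (by decide), charmatrix_apply_ne _ _ _ (by decide)]
  simp only [map_add, _root_.map_mul, map_sub]
  ring

lemma my_exists_roots (M : Matrix (Fin 2) (Fin 2) ℂ) :
    ∃ y₁ y₂ : ℂ, y₁ + y₂ = M.trace ∧ y₁ * y₂ = M.det := by
  have hdeg : (0 : WithBot ℕ) < M.charpoly.degree := by
    rw [Matrix.charpoly_degree_eq_dim]; norm_num
  obtain ⟨r, hr⟩ := Complex.exists_root hdeg
  refine ⟨r, M.trace - r, by ring, ?_⟩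
  have h := hr
  rw [Polynomial.IsRoot, my_charpoly_fin_two] at h
  simp only [eval_add, eval_sub, eval_mul, eval_pow, eval_X, eval_C] at h
  linear_combination -h

lemma my_charpoly_eq (M : Matrix (Fin 2) (Fin 2) ℂ) {y₁ y₂ : ℂ}
    (h1 : y₁ + y₂ = M.trace) (h2 : y₁ * y₂ = M.det) :
    M.charpoly = (X - C y₁) * (X - C y₂) := by
  rw [my_charpoly_fin_two, ← h1, ← h2]
  simp only [map_add, _root_.map_mul]
  ring

lemma my_deg_le (M : Matrix (Fin 2) (Fin 2) ℂ) (k : ℕ) :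
    (((X : ℂ[X]) ^ k) %ₘ M.charpoly).degree ≤ 1 := by
  have h2 := Polynomial.degree_modByMonic_lt ((X : ℂ[X]) ^ k) M.charpoly_monic
  rw [Matrix.charpoly_degree_eq_dim] at h2
  norm_num at h2
  by_cases h0 : ((X : ℂ[X]) ^ k) %ₘ M.charpoly = 0
  · rw [h0, Polynomial.degree_zero]; exact bot_le
  · rw [Polynomial.degree_eq_natDegree h0] at h2 ⊢
    have h3 : (((X : ℂ[X]) ^ k) %ₘ M.charpoly).natDegree < 2 := by exact_mod_cast h2
    exact_mod_cast Nat.lt_succ_iff.mp h3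

lemma my_key (M : Matrix (Fin 2) (Fin 2) ℂ) (k : ℕ) :
    ∃ u v : ℂ, M ^ k = u • M + v • 1 ∧
      ∀ z : ℂ, z ^ 2 - M.trace * z + M.det = 0 → z ^ k = u * z + v := by
  refine ⟨((X : ℂ[X]) ^ k %ₘ M.charpoly).coeff 1, ((X : ℂ[X]) ^ k %ₘ M.charpoly).coeff 0, ?_, ?_⟩
  · have hdiv := Polynomial.modByMonic_add_div ((X : ℂ[X]) ^ k) M.charpoly
    have hform := Polynomial.eq_X_add_C_of_degree_le_one (my_deg_le M k)
    calc M ^ k = (aeval M) ((X : ℂ[X]) ^ k) := by simp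
      _ = (aeval M) ((X : ℂ[X]) ^ k %ₘ M.charpoly + M.charpoly * ((X : ℂ[X]) ^ k /ₘ M.charpoly)) := by
          rw [hdiv]
      _ = (aeval M) ((X : ℂ[X]) ^ k %ₘ M.charpoly) := by
          rw [map_add, _root_.map_mul, Matrix.aeval_self_charpoly, zero_mul, add_zero]
      _ = _ := by
          rw [hform]
          simp [Algebra.algebraMap_eq_smul_one, smul_mul_assoc]
  · intro z hz
    have hdiv := Polynomial.modByMonic_add_div ((X : ℂ[X]) ^ k) M.charpoly
    have hroot : eval z M.charpoly = 0 := by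
      rw [my_charpoly_fin_two]
      simp only [eval_add, eval_sub, eval_mul, eval_pow, eval_X, eval_C]
      exact hz
    have hform := Polynomial.eq_X_add_C_of_degree_le_one (my_deg_le M k)
    calc z ^ k = eval z ((X : ℂ[X]) ^ k) := by simp
      _ = eval z ((X : ℂ[X]) ^ k %ₘ M.charpoly + M.charpoly * ((X : ℂ[X]) ^ k /ₘ M.charpoly)) := by
          rw [hdiv]
      _ = eval z ((X : ℂ[X]) ^ k %ₘ M.charpoly) := by
          rw [eval_add, eval_mul, hroot, zero_mul, add_zero]
      _ = _ := by rw [hform]; simp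

end Aux

open Polynomial in
theorem stmt_6 (a b c : ℤ) (ha : a ≠ 0) (hb : b ≠ 0) (hc : c ≠ 0)
    (hgcd : Int.gcd a (Int.gcd b c) = 1) (m n : ℕ) (hm : 0 < m) (hn : 0 < n)
    (X Y : Matrix (Fin 2) (Fin 2) ℤ)
    (heq : a • X ^ m + b • Y ^ n = c • (1 : Matrix (Fin 2) (Fin 2) ℤ)) :
    ∃ x₁ x₂ y₁ y₂ : ℂ,
      (X.map (Int.cast : ℤ → ℂ)).charpoly = (Polynomial.X - C x₁) * (Polynomial.X - C x₂) ∧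
      (Y.map (Int.cast : ℤ → ℂ)).charpoly = (Polynomial.X - C y₁) * (Polynomial.X - C y₂) ∧
      (a : ℂ) * x₁ ^ m + (b : ℂ) * y₁ ^ n = (c : ℂ) ∧
      (a : ℂ) * x₂ ^ m + (b : ℂ) * y₂ ^ n = (c : ℂ) := by
  set X' := X.map (Int.cast : ℤ → ℂ) with hX'
  set Y' := Y.map (Int.cast : ℤ → ℂ) with hY'
  have heqC : (a : ℂ) • X' ^ m + (b : ℂ) • Y' ^ n = (c : ℂ) • (1 : Matrix (Fin 2) (Fin 2) ℂ) := by
    have h := congrArg (RingHom.mapMatrix (Int.castRingHom ℂ) :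
      Matrix (Fin 2) (Fin 2) ℤ →+* Matrix (Fin 2) (Fin 2) ℂ) heq
    simp only [map_add, map_zsmul, map_pow, _root_.map_one, RingHom.mapMatrix_apply] at h
    rw [← Int.cast_smul_eq_zsmul ℂ a, ← Int.cast_smul_eq_zsmul ℂ b,
      ← Int.cast_smul_eq_zsmul ℂ c] at h
    exact h
  obtain ⟨u, v, hXm, hxev⟩ := my_key X' m
  obtain ⟨u', v', hYn, hyev⟩ := my_key Y' n
  rw [hXm, hYn] at heqC
  obtain ⟨x₁, x₂, hxs, hxp⟩ := my_exists_roots X'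
  have hXc := my_charpoly_eq X' hxs hxp
  have hx1 : x₁ ^ m = u * x₁ + v := hxev x₁ (by rw [← hxs, ← hxp]; ring)
  have hx2 : x₂ ^ m = u * x₂ + v := hxev x₂ (by rw [← hxs, ← hxp]; ring)
  set α := (a : ℂ) * u with hα
  set β := (b : ℂ) * u' with hβ
  set d := (c : ℂ) - (a : ℂ) * v - (b : ℂ) * v' with hd
  have h00 := congrFun (congrFun heqC 0) 0
  have h01 := congrFun (congrFun heqC 0) 1
  have h10 := congrFun (congrFun heqC 1) 0
  have h11 := congrFun (congrFun heqC 1) 1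
  simp only [Matrix.add_apply, Matrix.smul_apply, smul_eq_mul, Matrix.one_apply,
    eq_self_iff_true, if_true] at h00 h01 h10 h11
  norm_num at h01 h10
  have hE00 : α * X' 0 0 + β * Y' 0 0 = d := by
    linear_combination h00 + X' 0 0 * hα + Y' 0 0 * hβ - hd
  have hE01 : α * X' 0 1 + β * Y' 0 1 = 0 := by
    linear_combination h01 + X' 0 1 * hα + Y' 0 1 * hβ
  have hE10 : α * X' 1 0 + β * Y' 1 0 = 0 := by
    linear_combination h10 + X' 1 0 * hα + Y' 1 0 * hβ
  have hE11 : α * X' 1 1 + β * Y' 1 1 = d := by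
    linear_combination h11 + X' 1 1 * hα + Y' 1 1 * hβ - hd
  by_cases hb0 : β = 0
  · -- Y's contribution is scalar; X is essentially scalar too
    have e00 : α * X' 0 0 = d := by linear_combination hE00 - Y' 0 0 * hb0
    have e01 : α * X' 0 1 = 0 := by linear_combination hE01 - Y' 0 1 * hb0
    have e10 : α * X' 1 0 = 0 := by linear_combination hE10 - Y' 1 0 * hb0
    have e11 : α * X' 1 1 = d := by linear_combination hE11 - Y' 1 1 * hb0
    have hsum : (α * x₁ - d) + (α * x₂ - d) = 0 := by
      rw [Matrix.trace_fin_two] at hxs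
      linear_combination α * hxs + e00 + e11
    have hprod : (α * x₁ - d) * (α * x₂ - d) = 0 := by
      rw [Matrix.trace_fin_two] at hxs
      rw [Matrix.det_fin_two] at hxp
      linear_combination α ^ 2 * hxp - d * α * hxs + (α * X' 1 1 - d) * e00 - α * X' 1 0 * e01
    have h1 : α * x₁ - d = 0 := by
      have h3 : (α * x₁ - d) ^ 2 = 0 := by linear_combination (α * x₁ - d) * hsum - hprod
      exact pow_eq_zero_iff two_ne_zero |>.mp h3
    have h2 : α * x₂ - d = 0 := by linear_combination hsum - h1
    obtain ⟨y₁, y₂, hys, hyp⟩ := my_exists_roots Y'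
    have hYc := my_charpoly_eq Y' hys hyp
    have hy1 : y₁ ^ n = u' * y₁ + v' := hyev y₁ (by rw [← hys, ← hyp]; ring)
    have hy2 : y₂ ^ n = u' * y₂ + v' := hyev y₂ (by rw [← hys, ← hyp]; ring)
    exact ⟨x₁, x₂, y₁, y₂, hXc, hYc,
      by linear_combination (a : ℂ) * hx1 + (b : ℂ) * hy1 + h1 - x₁ * hα - y₁ * hβ + y₁ * hb0 + hd,
      by linear_combination (a : ℂ) * hx2 + (b : ℂ) * hy2 + h2 - x₂ * hα - y₂ * hβ + y₂ * hb0 + hd⟩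
  · -- β ≠ 0 : eigenvalues of Y are determined by those of X
    have hb00 : β * Y' 0 0 = d - α * X' 0 0 := by linear_combination hE00
    have hb01 : β * Y' 0 1 = -(α * X' 0 1) := by linear_combination hE01
    have hb10 : β * Y' 1 0 = -(α * X' 1 0) := by linear_combination hE10
    have hb11 : β * Y' 1 1 = d - α * X' 1 1 := by linear_combination hE11
    set y₁ := (d - α * x₁) / β with hy₁d
    set y₂ := (d - α * x₂) / β with hy₂d
    have hby1 : β * y₁ = d - α * x₁ := by rw [hy₁d]; field_simp
    have hby2 : β * y₂ = d - α * x₂ := by rw [hy₂d]; field_simp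
    rw [Matrix.trace_fin_two] at hxs
    rw [Matrix.det_fin_two] at hxp
    have hys : y₁ + y₂ = Y'.trace := by
      apply mul_left_cancel₀ hb0
      rw [Matrix.trace_fin_two]
      linear_combination hby1 + hby2 - hb00 - hb11 - α * hxs
    have hyp : y₁ * y₂ = Y'.det := by
      apply mul_left_cancel₀ (mul_ne_zero hb0 hb0)
      rw [Matrix.det_fin_two]
      linear_combination (β * y₂) * hby1 + (d - α * x₁) * hby2 - d * α * hxs + α ^ 2 * hxp
        - (β * Y' 1 1) * hb00 - (d - α * X' 0 0) * hb11 + (β * Y' 1 0) * hb01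
        - (α * X' 0 1) * hb10
    have hYc := my_charpoly_eq Y' hys hyp
    have hy1 : y₁ ^ n = u' * y₁ + v' := hyev y₁ (by rw [← hys, ← hyp]; ring)
    have hy2 : y₂ ^ n = u' * y₂ + v' := hyev y₂ (by rw [← hys, ← hyp]; ring)
    exact ⟨x₁, x₂, y₁, y₂, hXc, hYc,
      by linear_combination (a : ℂ) * hx1 + (b : ℂ) * hy1 + hby1 - x₁ * hα - y₁ * hβ + hd,
      by linear_combination (a : ℂ) * hx2 + (b : ℂ) * hy2 + hby2 - x₂ * hα - y₂ * hβ + hd⟩
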